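/- If A ⊆ X has even cardinality, then γ_A = (1/4) ∑_{B ⊆ A, |B| even} 2^{|B|} · 𝔼_{|A|−|B|} · s_B, where the sum is over all subsets B of A of even cardinality. -/

import Mathlib

open Finset

/-- The Euler numbers `𝔼ₖ`, defined by the EGF `1/cosh x = ∑ₖ 𝔼ₖ xᵏ/k!`
(so `𝔼₀ = 1`, `𝔼₂ = −1`, `𝔼₄ = 5`, and `𝔼ₖ = 0` for odd `k`); this recurrence
is obtained by equating coefficients in `cosh x · (1/cosh x) = 1`. -/
noncomputable def eulerNumber : ℕ → ℚ
  | n =>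
    (if n = 0 then 1 else 0) -
      ∑ k : Fin n, if (n - (k : ℕ)) % 2 = 0 then ((n.choose k : ℚ) * eulerNumber k) else 0
  decreasing_by exact k.2

lemma euler_rec (m : ℕ) (hm : Even m) :
    (∑ e ∈ Finset.range (m + 1),
      if Even e then (m.choose e : ℚ) * eulerNumber (m - e) else 0) =
    if m = 0 then 1 else 0 := by
  have hdef : eulerNumber m = (if m = 0 then 1 else 0) -
      ∑ k : Fin m, if (m - (k : ℕ)) % 2 = 0 then ((m.choose k : ℚ) * eulerNumber k) else 0 := by
    rw [eulerNumber]
  have hfin : (∑ k : Fin m, if (m - (k : ℕ)) % 2 = 0 then ((m.choose k : ℚ) * eulerNumber k) else 0)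
      = ∑ k ∈ Finset.range m, if Even k then (m.choose k : ℚ) * eulerNumber k else 0 := by
    rw [Fin.sum_univ_eq_sum_range
      (fun k => if (m - k) % 2 = 0 then ((m.choose k : ℚ) * eulerNumber k) else 0) m]
    refine Finset.sum_congr rfl fun k hk => ?_
    rw [Finset.mem_range] at hk
    have h : (m - k) % 2 = 0 ↔ Even k := by
      rw [← Nat.even_iff, Nat.even_sub hk.le]
      simp [hm]
    simp only [h]
  have hrefl : (∑ e ∈ Finset.range (m + 1),
      if Even e then (m.choose e : ℚ) * eulerNumber (m - e) else 0)
      = ∑ e ∈ Finset.range (m + 1), if Even e then (m.choose e : ℚ) * eulerNumber e else 0 := by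
    rw [← Finset.sum_range_reflect]
    refine Finset.sum_congr rfl fun j hj => ?_
    rw [Finset.mem_range, Nat.lt_succ_iff] at hj
    have h1 : m + 1 - 1 - j = m - j := by omega
    rw [h1]
    have h2 : Even (m - j) ↔ Even j := by rw [Nat.even_sub hj]; simp [hm]
    have h3 : m.choose (m - j) = m.choose j := Nat.choose_symm hj
    have h4 : m - (m - j) = j := Nat.sub_sub_self hj
    simp only [h2, h3, h4]
  rw [hrefl, Finset.sum_range_succ]
  have h5 : (if Even m then (m.choose m : ℚ) * eulerNumber m else 0) = eulerNumber m := by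
    rw [if_pos hm, Nat.choose_self]; push_cast; ring
  rw [h5]
  rw [hfin] at hdef
  linarith [hdef]

lemma euler_powerset {α : Type*} [DecidableEq α] (S : Finset α) (hS : Even S.card) :
    (∑ E ∈ S.powerset.filter (fun E => Even E.card),
      ((eulerNumber (S.card - E.card) : ℚ) : ℝ)) = if S = ∅ then 1 else 0 := by
  have key := euler_rec S.card hS
  have hq : (∑ E ∈ S.powerset.filter (fun E => Even E.card),
      (eulerNumber (S.card - E.card))) = if S.card = 0 then (1:ℚ) else 0 := by
    rw [Finset.sum_filter, Finset.sum_powerset, ← key]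
    refine Finset.sum_congr rfl fun j hj => ?_
    have hc : ∀ E ∈ powersetCard j S,
        (if Even E.card then (eulerNumber (S.card - E.card)) else 0)
          = if Even j then eulerNumber (S.card - j) else 0 := by
      intro E hE
      rw [(Finset.mem_powersetCard.mp hE).2]
    rw [Finset.sum_congr rfl hc, Finset.sum_const, Finset.card_powersetCard, nsmul_eq_mul]
    by_cases h : Even j <;> simp [h]
  have hcast : (∑ E ∈ S.powerset.filter (fun E => Even E.card),
      ((eulerNumber (S.card - E.card) : ℚ) : ℝ))
      = (((∑ E ∈ S.powerset.filter (fun E => Even E.card),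
        (eulerNumber (S.card - E.card))) : ℚ) : ℝ) := by push_cast; rfl
  rw [hcast, hq]
  by_cases h : S = ∅
  · simp [h]
  · rw [if_neg (by simpa [Finset.card_eq_zero] using h), if_neg h]; simp

lemma key_scalar {α : Type*} [DecidableEq α] (B C : Finset α) :
    2 * ∑ D ∈ B.powerset.filter (fun D => Even D.card), (1 - (-1 : ℝ) ^ (D ∩ C).card)
      = if (B ∩ C).Nonempty ∧ (B \ C).Nonempty then 2 ^ B.card else 0 := by
  classical
  have hx : ∀ D : Finset α,
      ((-1 : ℝ)) ^ (D ∩ C).card = ∏ i ∈ D, (if i ∈ C then (-1:ℝ) else 1) := by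
    intro D
    rw [Finset.prod_ite, Finset.prod_const, Finset.prod_const, one_pow, mul_one,
      Finset.filter_mem_eq_inter]
  have hps : ∀ f : α → ℝ, (∑ D ∈ B.powerset, ∏ i ∈ D, f i) = ∏ i ∈ B, (f i + 1) := by
    intro f
    rw [Finset.prod_add]
    simp
  have step1 : 2 * (∑ D ∈ B.powerset.filter (fun D => Even D.card),
      (1 - (-1 : ℝ) ^ (D ∩ C).card))
      = ∑ D ∈ B.powerset,
          ((1:ℝ) + ∏ i ∈ D, (-1:ℝ)) - (∑ D ∈ B.powerset, ∏ i ∈ D, (if i ∈ C then (-1:ℝ) else 1))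
        - ∑ D ∈ B.powerset, ∏ i ∈ D, (-(if i ∈ C then (-1:ℝ) else 1)) := by
    rw [Finset.sum_filter, Finset.mul_sum, ← Finset.sum_sub_distrib, ← Finset.sum_sub_distrib]
    refine Finset.sum_congr rfl fun D _ => ?_
    have hneg : (∏ i ∈ D, (-(if i ∈ C then (-1:ℝ) else 1)))
        = (∏ i ∈ D, (-1:ℝ)) * ∏ i ∈ D, (if i ∈ C then (-1:ℝ) else 1) := by
      rw [← Finset.prod_mul_distrib]
      exact Finset.prod_congr rfl fun i _ => by ring
    rw [hneg, Finset.prod_const, ← hx]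
    rcases Nat.even_or_odd D.card with h | h
    · rw [if_pos h, Even.neg_one_pow h]; ring
    · rw [if_neg (by simpa [Nat.not_even_iff_odd] using h), Odd.neg_one_pow h]; ring
  rw [step1]
  have e1 : (∑ D ∈ B.powerset, ((1:ℝ) + ∏ i ∈ D, (-1:ℝ)))
      = (2:ℝ)^B.card + (0:ℝ)^B.card := by
    rw [Finset.sum_add_distrib, hps (fun _ => (-1:ℝ)), Finset.sum_const,
      Finset.card_powerset, Finset.prod_const]
    norm_num
  have e2 : (∑ D ∈ B.powerset, ∏ i ∈ D, (if i ∈ C then (-1:ℝ) else 1))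
      = (0:ℝ)^(B ∩ C).card * (2:ℝ)^(B \ C).card := by
    rw [hps]
    have : ∀ i ∈ B, ((if i ∈ C then (-1:ℝ) else 1) + 1) = (if i ∈ C then (0:ℝ) else 2) := by
      intro i _; split <;> ring
    rw [Finset.prod_congr rfl this, Finset.prod_ite, Finset.prod_const, Finset.prod_const,
      Finset.filter_mem_eq_inter]
    congr 1
    rw [Finset.sdiff_eq_filter]
  have e3 : (∑ D ∈ B.powerset, ∏ i ∈ D, (-(if i ∈ C then (-1:ℝ) else 1)))
      = (2:ℝ)^(B ∩ C).card * (0:ℝ)^(B \ C).card := by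
    rw [hps]
    have : ∀ i ∈ B, (-(if i ∈ C then (-1:ℝ) else 1) + 1) = (if i ∈ C then (2:ℝ) else 0) := by
      intro i _; split <;> ring
    rw [Finset.prod_congr rfl this, Finset.prod_ite, Finset.prod_const, Finset.prod_const,
      Finset.filter_mem_eq_inter]
    congr 1
    rw [Finset.sdiff_eq_filter]
  rw [e1, e2, e3]
  by_cases h1 : (B ∩ C).Nonempty <;> by_cases h2 : (B \ C).Nonempty
  · rw [if_pos ⟨h1, h2⟩]
    have hB : B.Nonempty := by
      obtain ⟨i, hi⟩ := h1; exact ⟨i, (Finset.mem_inter.mp hi).1⟩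
    rw [zero_pow (Finset.card_ne_zero.mpr hB), zero_pow (Finset.card_ne_zero.mpr h1),
      zero_pow (Finset.card_ne_zero.mpr h2)]
    ring
  · rw [if_neg (by tauto)]
    have hBC : B \ C = ∅ := Finset.not_nonempty_iff_eq_empty.mp h2
    have hsub : B ⊆ C := Finset.sdiff_eq_empty_iff_subset.mp hBC
    have hBCi : B ∩ C = B := Finset.inter_eq_left.mpr hsub
    have hB : B.Nonempty := by
      obtain ⟨i, hi⟩ := h1; exact ⟨i, (Finset.mem_inter.mp hi).1⟩
    rw [hBC, hBCi]
    rw [zero_pow (Finset.card_ne_zero.mpr hB)]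
    simp
  · rw [if_neg (by tauto)]
    have hBC : B ∩ C = ∅ := Finset.not_nonempty_iff_eq_empty.mp h1
    have hd : B \ C = B := by
      rw [Finset.sdiff_eq_self_iff_disjoint, Finset.disjoint_iff_inter_eq_empty]
      exact hBC
    have hB : B.Nonempty := by
      obtain ⟨i, hi⟩ := h2; exact ⟨i, (Finset.mem_sdiff.mp hi).1⟩
    rw [hBC, hd, zero_pow (Finset.card_ne_zero.mpr hB)]
    simp
  · rw [if_neg (by tauto)]
    have hBC : B ∩ C = ∅ := Finset.not_nonempty_iff_eq_empty.mp h1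
    have hBD : B \ C = ∅ := Finset.not_nonempty_iff_eq_empty.mp h2
    have hB : B = ∅ := by
      have := Finset.sdiff_eq_empty_iff_subset.mp hBD
      rw [← Finset.inter_eq_left.mpr this, hBC]
    rw [hBC, hBD, hB]
    simp

noncomputable def corr {α : Type*} [Fintype α] [DecidableEq α]
    (p : Finset α → ℝ) (D : Finset α) : ℝ :=
  ∑ C : Finset α, p C * (-1 : ℝ) ^ ((D ∩ C).card)

lemma seg_id {α : Type*} [Fintype α] [DecidableEq α] (p : Finset α → ℝ)
    (hsum : ∑ A : Finset α, p A = 1) (B : Finset α) :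
    (2:ℝ) ^ B.card *
      (∑ C ∈ univ.filter (fun C : Finset α => (B ∩ C).Nonempty ∧ (B \ C).Nonempty), p C)
      = 2 * ∑ D ∈ B.powerset.filter (fun D => Even D.card), (1 - corr p D) := by
  classical
  rw [Finset.sum_filter, Finset.mul_sum]
  have step1 : ∀ C : Finset α,
      (2:ℝ)^B.card * (if (B ∩ C).Nonempty ∧ (B \ C).Nonempty then p C else 0)
        = p C * (2 * ∑ D ∈ B.powerset.filter (fun D => Even D.card),
            (1 - (-1:ℝ) ^ ((D ∩ C).card))) := by
    intro C
    rw [key_scalar]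
    split <;> ring
  rw [Finset.sum_congr rfl (fun C _ => step1 C)]
  have step2 : ∀ C : Finset α,
      p C * (2 * ∑ D ∈ B.powerset.filter (fun D => Even D.card),
          (1 - (-1:ℝ) ^ ((D ∩ C).card)))
        = ∑ D ∈ B.powerset.filter (fun D => Even D.card),
            2 * (p C * (1 - (-1:ℝ)^((D ∩ C).card))) := by
    intro C
    rw [Finset.mul_sum, Finset.mul_sum]
    exact Finset.sum_congr rfl fun D _ => by ring
  rw [Finset.sum_congr rfl (fun C _ => step2 C), Finset.sum_comm, Finset.mul_sum]
  refine Finset.sum_congr rfl fun D _ => ?_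
  unfold corr
  have : (∑ C : Finset α, 2 * (p C * (1 - (-1:ℝ)^((D ∩ C).card))))
      = 2 * ((∑ C : Finset α, p C) - ∑ C : Finset α, p C * (-1:ℝ)^((D ∩ C).card)) := by
    rw [← Finset.sum_sub_distrib, Finset.mul_sum]
    exact Finset.sum_congr rfl fun C _ => by ring
  rw [this, hsum]

lemma K_eval {α : Type*} [DecidableEq α] (A D : Finset α) (hA : Even A.card)
    (hD : D ⊆ A) (hDe : Even D.card) :
    (∑ B ∈ (A.powerset.filter (fun B => Even B.card)).filter (fun B => D ⊆ B),
      ((eulerNumber (A.card - B.card) : ℚ) : ℝ)) = if D = A then 1 else 0 := by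
  classical
  have hbij : (∑ B ∈ (A.powerset.filter (fun B => Even B.card)).filter (fun B => D ⊆ B),
      ((eulerNumber (A.card - B.card) : ℚ) : ℝ))
      = ∑ E ∈ (A \ D).powerset.filter (fun E => Even E.card),
        ((eulerNumber ((A \ D).card - E.card) : ℚ) : ℝ) := by
    refine Finset.sum_nbij' (fun B => B \ D) (fun E => E ∪ D) ?_ ?_ ?_ ?_ ?_
    · intro B hB
      simp only [Finset.mem_filter, Finset.mem_powerset] at hB ⊢
      obtain ⟨⟨hBA, hBe⟩, hDB⟩ := hB
      refine ⟨Finset.sdiff_subset_sdiff hBA (le_refl D), ?_⟩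
      rw [Finset.card_sdiff_of_subset hDB]
      rw [Nat.even_sub (Finset.card_le_card hDB)]
      simp [hBe, hDe]
    · intro E hE
      simp only [Finset.mem_filter, Finset.mem_powerset] at hE ⊢
      obtain ⟨hEA, hEe⟩ := hE
      have hdisj : Disjoint E D := Finset.disjoint_of_subset_left hEA Finset.sdiff_disjoint
      refine ⟨⟨?_, ?_⟩, Finset.subset_union_right⟩
      · exact Finset.union_subset (hEA.trans Finset.sdiff_subset) hD
      · rw [Finset.card_union_of_disjoint hdisj]
        exact hEe.add hDe
    · intro B hB
      simp only [Finset.mem_filter, Finset.mem_powerset] at hB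
      exact Finset.sdiff_union_of_subset hB.2
    · intro E hE
      simp only [Finset.mem_filter, Finset.mem_powerset] at hE
      have hdisj : Disjoint E D := Finset.disjoint_of_subset_left hE.1 Finset.sdiff_disjoint
      exact Finset.union_sdiff_cancel_right hdisj
    · intro B hB
      simp only [Finset.mem_filter, Finset.mem_powerset] at hB
      obtain ⟨⟨hBA, hBe⟩, hDB⟩ := hB
      congr 2
      rw [Finset.card_sdiff_of_subset hD, Finset.card_sdiff_of_subset hDB]
      have h1 := Finset.card_le_card hDB
      have h2 := Finset.card_le_card hBA
      omega
  rw [hbij]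
  have hADe : Even (A \ D).card := by
    rw [Finset.card_sdiff_of_subset hD, Nat.even_sub (Finset.card_le_card hD)]
    simp [hA, hDe]
  rw [euler_powerset (A \ D) hADe]
  congr 1
  rw [eq_iff_iff, Finset.sdiff_eq_empty_iff_subset]
  constructor
  · intro h; exact Finset.Subset.antisymm hD h
  · intro h; rw [h]

lemma gamma_half {α : Type*} [Fintype α] [DecidableEq α] (p : Finset α → ℝ)
    (hsum : ∑ A : Finset α, p A = 1) (A : Finset α) (hA : Even A.card) :
    (∑ B ∈ univ.filter (fun B : Finset α => Odd (A ∩ B).card), (p B + p Bᶜ) / 2)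
      = (1 - corr p A) / 2 := by
  classical
  have hcard : ∀ C : Finset α, (A ∩ Cᶜ).card = A.card - (A ∩ C).card := by
    intro C
    have h1 : A ∩ Cᶜ = A \ C := by
      ext i; simp [Finset.mem_sdiff]
    rw [h1, ← Finset.sdiff_inter_self_left, Finset.card_sdiff_of_subset Finset.inter_subset_left]
  have hodd : ∀ C : Finset α, Odd (A ∩ Cᶜ).card ↔ Odd (A ∩ C).card := by
    intro C
    rw [hcard C, Nat.odd_sub (Finset.card_le_card Finset.inter_subset_left)]
    rcases Nat.even_or_odd (A ∩ C).card with h | h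
    · simp [Nat.not_odd_iff_even.mpr h, ← Nat.not_even_iff_odd, hA, h]
    · simp [h, ← Nat.not_even_iff_odd, hA, Nat.not_even_iff_odd.mpr h]
  have hsplit : (∑ B ∈ univ.filter (fun B : Finset α => Odd (A ∩ B).card), (p B + p Bᶜ) / 2)
      = (∑ B ∈ univ.filter (fun B : Finset α => Odd (A ∩ B).card), p B / 2)
        + ∑ B ∈ univ.filter (fun B : Finset α => Odd (A ∩ B).card), p Bᶜ / 2 := by
    rw [← Finset.sum_add_distrib]
    exact Finset.sum_congr rfl fun B _ => by ring
  have hswap : (∑ B ∈ univ.filter (fun B : Finset α => Odd (A ∩ B).card), p Bᶜ / 2)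
      = ∑ B ∈ univ.filter (fun B : Finset α => Odd (A ∩ B).card), p B / 2 := by
    refine Finset.sum_nbij' (fun B => Bᶜ) (fun B => Bᶜ) ?_ ?_ ?_ ?_ ?_
    · intro B hB
      simp only [Finset.mem_filter, Finset.mem_univ, true_and] at hB ⊢
      exact (hodd B).mpr hB
    · intro B hB
      simp only [Finset.mem_filter, Finset.mem_univ, true_and] at hB ⊢
      exact (hodd B).mpr hB
    · intro B _; exact compl_compl B
    · intro B _; exact compl_compl B
    · intro B _; rfl
  rw [hsplit, hswap, ← Finset.sum_add_distrib]
  have hhalf : ∀ B : Finset α, p B / 2 + p B / 2 = p B := fun B => by ring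
  rw [Finset.sum_congr rfl fun B _ => hhalf B]
  rw [Finset.sum_filter]
  unfold corr
  have : ∀ C : Finset α, (if Odd (A ∩ C).card then p C else 0)
      = (p C - p C * (-1:ℝ)^((A ∩ C).card)) / 2 := by
    intro C
    rcases Nat.even_or_odd (A ∩ C).card with h | h
    · rw [if_neg (Nat.not_odd_iff_even.mpr h), Even.neg_one_pow h]; ring
    · rw [if_pos h, Odd.neg_one_pow h]; ring
  rw [Finset.sum_congr rfl fun C _ => this C, ← Finset.sum_div, Finset.sum_sub_distrib, hsum]

/-- For a site-pattern distribution `p` with symmetrization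
`p̃ B = (p B + p Bᶜ)/2`, segregating-site probabilities
`s A = ∑_{B : A ∩ B ≠ ∅, A ∖ B ≠ ∅} p B`, and `γ A = ∑_{B : |A ∩ B| odd} p̃ B`:
if `|A|` is even then
`γ A = (1/4) ∑_{B ⊆ A, |B| even} 2^{|B|} 𝔼_{|A|−|B|} s B`. -/
theorem gamma_from_even_segregating
    {α : Type*} [Fintype α] [DecidableEq α]
    (p : Finset α → ℝ) (hp : ∀ A : Finset α, 0 ≤ p A)
    (hsum : ∑ A : Finset α, p A = 1)
    (s : Finset α → ℝ)
    (hs : ∀ A : Finset α, s A =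
      ∑ B ∈ univ.filter (fun B : Finset α => (A ∩ B).Nonempty ∧ (A \ B).Nonempty), p B)
    (A : Finset α) (hA : Even A.card) :
    (∑ B ∈ univ.filter (fun B : Finset α => Odd (A ∩ B).card), (p B + p Bᶜ) / 2) =
      1 / 4 * ∑ B ∈ A.powerset.filter (fun B : Finset α => Even B.card),
        2 ^ B.card * (eulerNumber (A.card - B.card) : ℝ) * s B := by
  classical
  rw [gamma_half p hsum A hA]
  have hseg : ∀ B : Finset α, (2:ℝ)^B.card * s B
      = 2 * ∑ D ∈ B.powerset.filter (fun D => Even D.card), (1 - corr p D) := by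
    intro B
    rw [hs B]
    exact seg_id p hsum B
  have hP : ∀ B ∈ A.powerset.filter (fun B : Finset α => Even B.card),
      (2:ℝ) ^ B.card * (eulerNumber (A.card - B.card) : ℝ) * s B
        = ∑ D ∈ B.powerset.filter (fun D => Even D.card),
            ((eulerNumber (A.card - B.card) : ℚ) : ℝ) * (2 * (1 - corr p D)) := by
    intro B _
    have h1 : (2:ℝ)^B.card * (eulerNumber (A.card - B.card) : ℝ) * s B
        = ((eulerNumber (A.card - B.card) : ℚ) : ℝ) * ((2:ℝ)^B.card * s B) := by
      push_cast; ring
    rw [h1, hseg B, Finset.mul_sum, Finset.mul_sum]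
  rw [Finset.sum_congr rfl hP]
  rw [Finset.sum_comm'
    (s := A.powerset.filter (fun B : Finset α => Even B.card))
    (t := fun B => B.powerset.filter (fun D => Even D.card))
    (t' := A.powerset.filter (fun B : Finset α => Even B.card))
    (s' := fun D => (A.powerset.filter (fun B : Finset α => Even B.card)).filter
      (fun B => D ⊆ B))
    (by
      intro B D
      simp only [Finset.mem_filter, Finset.mem_powerset]
      constructor
      · rintro ⟨⟨hBA, hBe⟩, hDB, hDe⟩
        exact ⟨⟨⟨hBA, hBe⟩, hDB⟩, hDB.trans hBA, hDe⟩
      · rintro ⟨⟨⟨hBA, hBe⟩, hDB⟩, _, hDe⟩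
        exact ⟨⟨hBA, hBe⟩, hDB, hDe⟩)]
  have hK : ∀ D ∈ A.powerset.filter (fun B : Finset α => Even B.card),
      (∑ B ∈ (A.powerset.filter (fun B : Finset α => Even B.card)).filter (fun B => D ⊆ B),
        ((eulerNumber (A.card - B.card) : ℚ) : ℝ) * (2 * (1 - corr p D)))
        = if D = A then 2 * (1 - corr p A) else 0 := by
    intro D hD
    simp only [Finset.mem_filter, Finset.mem_powerset] at hD
    rw [← Finset.sum_mul, K_eval A D hA hD.1 hD.2]
    split_ifs with h
    · rw [h]; ring
    · ring
  rw [Finset.sum_congr rfl hK, Finset.sum_ite_eq']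
  rw [if_pos (by simp [Finset.mem_filter, hA])]
  ring
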